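/- For every real number α with (√7 − 1)/2 ≤ α ≤ (√13 − 1)/2 and α ≠ 1, the function f_α is monotonically increasing on the interval [0, 1]: for all x, y with 0 ≤ x ≤ y ≤ 1, f_α(x) ≤ f_α(y). -/

import Mathlib

private lemma gDeriv (α : ℝ) {s : ℝ} (hs : s ∈ Set.Ioo (0:ℝ) 1) :
    HasDerivAt (fun s : ℝ => ((1 - s)/2)^α + ((1 + s)/2)^α)
      ((-(1/2)) * α * ((1 - s)/2)^(α-1) + (1/2) * α * ((1 + s)/2)^(α-1)) s := by
  obtain ⟨hs0, hs1⟩ := hs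
  have h1 : HasDerivAt (fun s : ℝ => (1 - s)/2) (-(1/2)) s := by
    have := ((hasDerivAt_id s).const_sub 1).div_const 2
    simp only [id_eq] at this
    rwa [neg_div] at this
  have h2 : HasDerivAt (fun s : ℝ => (1 + s)/2) (1/2) s := by
    have := ((hasDerivAt_id s).const_add 1).div_const 2
    simpa using this
  have hb1 : (1 - s)/2 ≠ 0 := ne_of_gt (by linarith)
  have hb2 : (1 + s)/2 ≠ 0 := ne_of_gt (by linarith)
  exact (h1.rpow_const (Or.inl hb1)).add (h2.rpow_const (Or.inl hb2))

private lemma gCont (α : ℝ) (hα : 0 < α) :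
    ContinuousOn (fun s : ℝ => ((1 - s)/2)^α + ((1 + s)/2)^α) (Set.Icc 0 1) := by
  apply ContinuousOn.add
  · exact (((continuous_const.sub continuous_id).div_const 2).continuousOn).rpow_const
      (fun x _ => Or.inr hα.le)
  · exact (((continuous_const.add continuous_id).div_const 2).continuousOn).rpow_const
      (fun x _ => Or.inr hα.le)

private lemma gDiff (α : ℝ) :
    DifferentiableOn ℝ (fun s : ℝ => ((1 - s)/2)^α + ((1 + s)/2)^α)
      (interior (Set.Icc (0:ℝ) 1)) := by
  rw [interior_Icc]
  intro s hs
  exact ((gDeriv α hs).differentiableAt).differentiableWithinAt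

private lemma gMono (α : ℝ) (hα : 1 < α) :
    MonotoneOn (fun s : ℝ => ((1 - s)/2)^α + ((1 + s)/2)^α) (Set.Icc 0 1) := by
  apply monotoneOn_of_deriv_nonneg (convex_Icc 0 1) (gCont α (by linarith)) (gDiff α)
  intro s hs
  rw [interior_Icc] at hs
  rw [(gDeriv α hs).deriv]
  obtain ⟨hs0, hs1⟩ := hs
  have hle : ((1 - s)/2 : ℝ) ≤ (1 + s)/2 := by linarith
  have h := Real.rpow_le_rpow (by linarith) hle (by linarith : (0:ℝ) ≤ α - 1)
  nlinarith [h, Real.rpow_nonneg (by linarith : (0:ℝ) ≤ (1 - s)/2) (α - 1)]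

private lemma gAnti (α : ℝ) (hα0 : 0 < α) (hα : α < 1) :
    AntitoneOn (fun s : ℝ => ((1 - s)/2)^α + ((1 + s)/2)^α) (Set.Icc 0 1) := by
  apply antitoneOn_of_deriv_nonpos (convex_Icc 0 1) (gCont α hα0) (gDiff α)
  intro s hs
  rw [interior_Icc] at hs
  rw [(gDeriv α hs).deriv]
  obtain ⟨hs0, hs1⟩ := hs
  have hle : ((1 - s)/2 : ℝ) ≤ (1 + s)/2 := by linarith
  have h : ((1 + s)/2 : ℝ)^(α-1) ≤ ((1 - s)/2)^(α-1) :=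
    Real.rpow_le_rpow_of_nonpos (by linarith) hle (by linarith)
  nlinarith [h, Real.rpow_nonneg (by linarith : (0:ℝ) ≤ (1 + s)/2) (α - 1)]

private lemma gPos (α : ℝ) {s : ℝ} (hs : s ∈ Set.Icc (0:ℝ) 1) :
    0 < ((1 - s)/2)^α + ((1 + s)/2)^α := by
  obtain ⟨hs0, hs1⟩ := hs
  have h1 : (0:ℝ) ≤ ((1 - s)/2)^α := Real.rpow_nonneg (by linarith) α
  have h2 : (0:ℝ) < ((1 + s)/2)^α := Real.rpow_pos_of_pos (by linarith) α
  linarith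

/-- The function `f_α` through which the Rényi-α entanglement of a two-qubit
state is expressed in terms of the concurrence. -/
noncomputable def fRenyi (α x : ℝ) : ℝ :=
  (1 / (1 - α)) *
    Real.logb 2 (((1 - Real.sqrt (1 - x)) / 2) ^ α + ((1 + Real.sqrt (1 - x)) / 2) ^ α)

theorem fRenyi_monotone (α : ℝ) (hα1 : (Real.sqrt 7 - 1) / 2 ≤ α)
    (hα2 : α ≤ (Real.sqrt 13 - 1) / 2) (hα : α ≠ 1) :
    ∀ x y : ℝ, 0 ≤ x → x ≤ y → y ≤ 1 → fRenyi α x ≤ fRenyi α y := by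
  have hα0 : 0 < α := by
    have h7 : Real.sqrt 7 ^ 2 = 7 := Real.sq_sqrt (by norm_num)
    nlinarith [Real.sqrt_nonneg 7]
  intro x y hx hxy hy
  set s := Real.sqrt (1 - y) with hs
  set t := Real.sqrt (1 - x) with ht
  have hst : s ≤ t := Real.sqrt_le_sqrt (by linarith)
  have hsmem : s ∈ Set.Icc (0:ℝ) 1 :=
    ⟨Real.sqrt_nonneg _, Real.sqrt_le_one.mpr (by linarith)⟩
  have htmem : t ∈ Set.Icc (0:ℝ) 1 :=
    ⟨Real.sqrt_nonneg _, Real.sqrt_le_one.mpr (by linarith)⟩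
  have hps := gPos α hsmem
  have hpt := gPos α htmem
  unfold fRenyi
  rw [← hs, ← ht]
  rcases lt_or_gt_of_ne hα with hlt | hgt
  · -- α < 1 : g antitone in s, so g t ≤ g s; coefficient positive
    have hg := gAnti α hα0 hlt hsmem htmem hst
    have hlog : Real.logb 2 (((1 - t)/2)^α + ((1 + t)/2)^α)
        ≤ Real.logb 2 (((1 - s)/2)^α + ((1 + s)/2)^α) :=
      Real.logb_le_logb_of_le (by norm_num) hpt hg
    have hc : (0:ℝ) ≤ 1 / (1 - α) := by
      apply le_of_lt; apply div_pos one_pos; linarith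
    exact mul_le_mul_of_nonneg_left hlog hc
  · -- 1 < α : g monotone in s, so g s ≤ g t; coefficient negative
    have hg := gMono α hgt hsmem htmem hst
    have hlog : Real.logb 2 (((1 - s)/2)^α + ((1 + s)/2)^α)
        ≤ Real.logb 2 (((1 - t)/2)^α + ((1 + t)/2)^α) :=
      Real.logb_le_logb_of_le (by norm_num) hps hg
    have hc : 1 / (1 - α) ≤ 0 := by
      apply le_of_lt; apply div_neg_of_pos_of_neg one_pos; linarith
    exact mul_le_mul_of_nonpos_left hlog hc
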